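/- Let (W,S) be a Coxeter system with Bruhat order, s ∈ S, u ≤ w with u < us, w < ws, and us ≰ w. Then for every v in the Bruhat interval [u,w], one has vs > v. -/

import Mathlib

namespace BruhatAux

open CoxeterSystem List

attribute [local instance] Classical.propDecidable

set_option linter.unusedSectionVars false

variable {B W : Type*} [Group W] {M : CoxeterMatrix B} (cs : CoxeterSystem M W)

local prefix:100 "ℓ" => cs.length
local prefix:100 "π" => cs.wordProd
local prefix:100 "ss" => cs.simple

/-- Indicator function with values in `ZMod 2`. -/
noncomputable def indic (a b : W) : ZMod 2 := if a = b then 1 else 0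

lemma indic_congr {a b a' b' : W} (h : (a = b) ↔ (a' = b')) : indic a b = indic a' b' := by
  unfold indic
  by_cases hab : a = b
  · rw [if_pos hab, if_pos (h.mp hab)]
  · rw [if_neg hab, if_neg (fun hc => hab (h.mpr hc))]

lemma zmod2_cases : ∀ x : ZMod 2, x = 0 ∨ x = 1 := by decide

lemma zmod2_add_self (x : ZMod 2) : x + x = 0 := by
  rcases zmod2_cases x with h | h <;> rw [h] <;> decide

/-- The basic permutation of `W × ZMod 2` attached to a simple reflection. -/
noncomputable def sigmaFun (i : B) : W × ZMod 2 → W × ZMod 2 :=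
  fun x => (cs.simple i * x.1 * cs.simple i, x.2 + indic x.1 (cs.simple i))

lemma sigmaFun_involutive (i : B) : Function.Involutive (sigmaFun cs i) := by
  rintro ⟨t, e⟩
  unfold sigmaFun
  have h1 : cs.simple i * (cs.simple i * t * cs.simple i) * cs.simple i = t := by
    rw [← mul_assoc, ← mul_assoc, cs.simple_mul_simple_self, one_mul, mul_assoc,
      cs.simple_mul_simple_self, mul_one]
  have h2 : indic (cs.simple i * t * cs.simple i) (cs.simple i) = indic t (cs.simple i) := by
    apply indic_congr
    constructor
    · intro h
      have := congrArg (fun x => cs.simple i * x * cs.simple i) h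
      simpa [h1, cs.simple_mul_simple_self, mul_assoc] using this
    · intro h
      rw [h, cs.simple_mul_simple_self, one_mul]
  simp only [h1, h2]
  rw [add_assoc, zmod2_add_self, add_zero]

/-- The permutation of `W × ZMod 2` attached to a simple reflection. -/
noncomputable def sigma (i : B) : Equiv.Perm (W × ZMod 2) :=
  (sigmaFun_involutive cs i).toPerm

lemma sigma_apply (i : B) (t : W) (e : ZMod 2) :
    sigma cs i (t, e) = (cs.simple i * t * cs.simple i, e + indic t (cs.simple i)) := rfl

end BruhatAux
namespace BruhatAux

section GenericGroup

variable {W : Type*} [Group W]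

lemma comm_pow {x p : W} (hx : x * p = p⁻¹ * x) : ∀ k : ℕ, x * p ^ k = (p⁻¹) ^ k * x := by
  intro k
  induction k with
  | zero => simp
  | succ k ih =>
      rw [pow_succ, ← mul_assoc, ih, mul_assoc, hx, ← mul_assoc, ← pow_succ]

lemma sq_of_inv_eq {b : W} (hb : b⁻¹ = b) : b * b = 1 := by
  nth_rewrite 1 [← hb]
  exact inv_mul_cancel b

variable {a b : W} (ha : a⁻¹ = a) (hb : b⁻¹ = b)

include ha hb

lemma ginv : (a*b)⁻¹ = b * a := by rw [mul_inv_rev, ha, hb]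

lemma g0 : a * (a*b) = b := by rw [← mul_assoc, sq_of_inv_eq ha, one_mul]

lemma g1 : b * (a*b) = (a*b)⁻¹ * b := by
  rw [ginv ha hb, mul_assoc]

lemma g2 : a * (a*b) = (a*b)⁻¹ * a := by
  rw [g0 ha hb, ginv ha hb, mul_assoc, sq_of_inv_eq ha, mul_one]

lemma genA (m : ℕ) : ((a*b)⁻¹)^m * b * (a*b)^m = a * (a*b)^(2*m+1) := by
  have hq : ((a*b)⁻¹)^m * b * (a*b)^m = ((a*b)⁻¹)^(m+m) * b := by
    rw [mul_assoc, comm_pow (g1 ha hb), ← mul_assoc, ← pow_add]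
  rw [hq]
  have h2 : a * (a*b)^(2*m+1) = ((a*b)⁻¹)^(2*m) * (a * (a*b)) := by
    rw [pow_succ, ← mul_assoc, comm_pow (g2 ha hb), mul_assoc]
  rw [h2, g0 ha hb, two_mul]

lemma genB (m : ℕ) : ((a*b)⁻¹)^m * (b*a*b) * (a*b)^m = a * (a*b)^(2*m+2) := by
  have h1 : a * (a*b)^(2*m+2) = ((a*b)⁻¹)^m * (a * (a*b)^(m+2)) := by
    rw [show 2*m+2 = m + (m+2) by ring, pow_add, ← mul_assoc, comm_pow (g2 ha hb), mul_assoc]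
  rw [h1, mul_assoc]
  congr 1
  rw [show m+2 = 2+m by ring, pow_add, ← mul_assoc]
  congr 1
  rw [pow_two, ← mul_assoc, g0 ha hb, ← mul_assoc]

omit ha in
lemma conj_b (x : W) : b * (b * x * b) * b = x := by
  rw [show b*(b*x*b)*b = b*(b*(x*(b*b))) by group, sq_of_inv_eq hb, mul_one,
    ← mul_assoc, sq_of_inv_eq hb, one_mul]

omit ha hb

lemma genIff1 (p t x : W) (m : ℕ) :
    p^m * t * (p⁻¹)^m = x ↔ t = (p⁻¹)^m * x * p^m := by
  rw [inv_pow]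
  constructor
  · intro h; rw [← h]; group
  · intro h; rw [h]; group

include hb in
lemma genIff0 (x y : W) : b * x * b = y ↔ x = b * y * b := by
  constructor
  · intro h; rw [← h, conj_b hb]
  · intro h; rw [h, conj_b hb]

end GenericGroup

variable {B W : Type*} [Group W] {M : CoxeterMatrix B} (cs : CoxeterSystem M W)

lemma sigma_pow_apply (i j : B) (m : ℕ) (t : W) (e : ZMod 2) :
    ((sigma cs i * sigma cs j) ^ m) (t, e) =
      ((cs.simple i * cs.simple j) ^ m * t * ((cs.simple i * cs.simple j)⁻¹) ^ m,
        e + ∑ n ∈ Finset.range (2*m),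
          indic t (cs.simple i * (cs.simple i * cs.simple j) ^ (n+1))) := by
  set a := cs.simple i with hadef
  set b := cs.simple j with hbdef
  have ha : a⁻¹ = a := cs.inv_simple i
  have hb : b⁻¹ = b := cs.inv_simple j
  induction m with
  | zero => simp
  | succ m ih =>
      rw [pow_succ', Equiv.Perm.mul_apply, ih, Equiv.Perm.mul_apply, sigma_apply, sigma_apply]
      have hA1 : a * (b * ((a*b)^m * t * ((a*b)⁻¹)^m) * b) * a
          = (a*b)^(m+1) * t * ((a*b)⁻¹)^(m+1) := by
        have hre : ∀ X : W, a * (b * X * b) * a = (a*b) * X * (b*a) := by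
          intro X; group
        rw [hre, ← ginv ha hb, pow_succ', pow_succ]
        group
      have hI1 : indic ((a*b)^m * t * ((a*b)⁻¹)^m) b
          = indic t (a * (a*b)^(2*m+1)) := by
        apply indic_congr
        rw [genIff1, genA ha hb]
      have hI2 : indic (b * ((a*b)^m * t * ((a*b)⁻¹)^m) * b) a
          = indic t (a * (a*b)^(2*m+2)) := by
        apply indic_congr
        rw [genIff0 hb, genIff1, genB ha hb]
      rw [hA1, hI1, hI2]
      rw [show 2*(m+1) = (2*m+1)+1 by ring, Finset.sum_range_succ, Finset.sum_range_succ]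
      rw [show 2*m+1+1 = 2*m+2 by ring]
      rw [Prod.mk.injEq]
      refine ⟨rfl, ?_⟩
      ring

lemma sigma_liftable : M.IsLiftable (fun i => sigma cs i) := by
  intro i j
  apply Equiv.ext
  rintro ⟨t, e⟩
  rw [sigma_pow_apply]
  have hp : (cs.simple i * cs.simple j) ^ (M i j) = 1 := cs.simple_mul_simple_pow i j
  have hpinv : ((cs.simple i * cs.simple j)⁻¹) ^ (M i j) = 1 := by
    rw [inv_pow, hp, inv_one]
  have hsum : ∑ n ∈ Finset.range (2*(M i j)),
      indic t (cs.simple i * (cs.simple i * cs.simple j) ^ (n+1)) = 0 := by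
    rw [show 2*(M i j) = M i j + M i j by ring, Finset.sum_range_add, ← Finset.sum_add_distrib]
    apply Finset.sum_eq_zero
    intro n _
    have hpow : (cs.simple i * cs.simple j) ^ (M i j + n + 1)
        = (cs.simple i * cs.simple j) ^ (n+1) := by
      rw [show M i j + n + 1 = M i j + (n+1) by ring, pow_add, hp, one_mul]
    rw [hpow, zmod2_add_self]
  rw [hp, hpinv, hsum, one_mul, mul_one, add_zero]
  rfl

end BruhatAux
namespace BruhatAux

variable {B W : Type*} [Group W] {M : CoxeterMatrix B} (cs : CoxeterSystem M W)

lemma genIff2 {W' : Type*} [Group W'] (w t x : W') : w * t * w⁻¹ = x ↔ t = w⁻¹ * x * w := by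
  constructor
  · intro h; rw [← h]; group
  · intro h; rw [h]; group

/-- The cocycle homomorphism into permutations of `W × ZMod 2`. -/
noncomputable def phi : W →* Equiv.Perm (W × ZMod 2) :=
  cs.lift ⟨fun i => sigma cs i, sigma_liftable cs⟩

lemma phi_simple (i : B) : phi cs (cs.simple i) = sigma cs i :=
  cs.lift_apply_simple (sigma_liftable cs) i

/-- `ZMod 2`-valued count of occurrences in a list. -/
noncomputable def countZ (t : W) : List W → ZMod 2
  | [] => 0
  | x :: xs => indic t x + countZ t xs

lemma countZ_nil (t : W) : countZ t ([] : List W) = 0 := rfl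

lemma countZ_cons (t x : W) (xs : List W) :
    countZ t (x :: xs) = indic t x + countZ t xs := rfl

lemma countZ_eq_zero_of_not_mem {t : W} {l : List W} (h : t ∉ l) : countZ t l = 0 := by
  induction l with
  | nil => rfl
  | cons x xs ih =>
      rw [countZ_cons]
      have hne : t ≠ x := fun hc => h (hc ▸ List.mem_cons_self (a := x) (l := xs))
      rw [indic, if_neg hne, zero_add]
      exact ih (fun hc => h (List.mem_cons_of_mem x hc))

lemma mem_of_countZ_ne_zero {t : W} {l : List W} (h : countZ t l ≠ 0) : t ∈ l := by
  by_contra hc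
  exact h (countZ_eq_zero_of_not_mem hc)

lemma ris_cons (i : B) (ω : List B) :
    cs.rightInvSeq (i :: ω)
      = ((cs.wordProd ω)⁻¹ * cs.simple i * cs.wordProd ω) :: cs.rightInvSeq ω := rfl

lemma phi_wordProd (ω : List B) (t : W) (e : ZMod 2) :
    phi cs (cs.wordProd ω) (t, e)
      = (cs.wordProd ω * t * (cs.wordProd ω)⁻¹, e + countZ t (cs.rightInvSeq ω)) := by
  induction ω generalizing t e with
  | nil => simp [countZ_nil, Equiv.Perm.one_apply]
  | cons i ω ih =>
      rw [cs.wordProd_cons, map_mul, Equiv.Perm.mul_apply, ih, phi_simple, sigma_apply,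
        ris_cons, countZ_cons]
      rw [Prod.mk.injEq]
      constructor
      · rw [mul_inv_rev, cs.inv_simple]
        group
      · have h1 : indic (cs.wordProd ω * t * (cs.wordProd ω)⁻¹) (cs.simple i)
            = indic t ((cs.wordProd ω)⁻¹ * cs.simple i * cs.wordProd ω) := by
          apply indic_congr
          exact genIff2 _ _ _
        rw [h1]
        ring

/-- The reflection cocycle with values in `ZMod 2`. -/
noncomputable def nn (w t : W) : ZMod 2 := (phi cs w (t, 0)).2

lemma nn_wordProd (ω : List B) (t : W) :
    nn cs (cs.wordProd ω) t = countZ t (cs.rightInvSeq ω) := by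
  rw [nn, phi_wordProd, zero_add]

lemma phi_apply (w t : W) (e : ZMod 2) :
    phi cs w (t, e) = (w * t * w⁻¹, e + nn cs w t) := by
  obtain ⟨ω, -, rfl⟩ := cs.exists_reduced_word' w
  rw [phi_wordProd, nn_wordProd]

lemma nn_cocycle (x y t : W) : nn cs (x * y) t = nn cs y t + nn cs x (y * t * y⁻¹) := by
  have h : phi cs (x * y) (t, 0) = phi cs x (phi cs y (t, 0)) := by
    rw [map_mul, Equiv.Perm.mul_apply]
  rw [phi_apply, phi_apply, phi_apply] at h
  have := congrArg Prod.snd h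
  simpa using this

lemma nn_simple (i : B) (t : W) : nn cs (cs.simple i) t = indic t (cs.simple i) := by
  rw [nn, phi_simple, sigma_apply, zero_add]

lemma nn_reflection_self {t : W} (ht : cs.IsReflection t) : nn cs t t = 1 := by
  obtain ⟨w, i, rfl⟩ := ht
  obtain ⟨υ, -, rfl⟩ := cs.exists_reduced_word' w
  induction υ with
  | nil =>
      simp only [CoxeterSystem.wordProd_nil, one_mul, inv_one, mul_one]
      rw [nn_simple, indic, if_pos rfl]
  | cons j υ ih =>
      rw [cs.wordProd_cons]
      set u := cs.wordProd υ with hu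
      set t₀ := u * cs.simple i * u⁻¹ with ht₀
      have hT : cs.simple j * u * cs.simple i * (cs.simple j * u)⁻¹
          = cs.simple j * (t₀ * cs.simple j) := by
        rw [ht₀, mul_inv_rev, cs.inv_simple]
        group
      rw [hT, nn_cocycle]
      have hX1 : (t₀ * cs.simple j) * (cs.simple j * (t₀ * cs.simple j)) * (t₀ * cs.simple j)⁻¹
          = t₀ := by
        simp [mul_assoc, cs.simple_mul_simple_cancel_left]
      have hsj : cs.simple j * (cs.simple j * (t₀ * cs.simple j)) * (cs.simple j)⁻¹ = t₀ := by
        simp [mul_assoc, cs.simple_mul_simple_cancel_left]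
      rw [hX1, nn_cocycle, hsj, nn_simple, nn_simple, ih]
      have hind : indic (cs.simple j * (t₀ * cs.simple j)) (cs.simple j)
          = indic t₀ (cs.simple j) := by
        apply indic_congr
        constructor
        · intro h
          have h2 : t₀ * cs.simple j = 1 := by
            apply mul_left_cancel (a := cs.simple j)
            rw [h, mul_one]
          have h3 := congrArg (fun z => z * cs.simple j) h2
          simpa [cs.simple_mul_simple_cancel_right] using h3
        · intro h
          rw [h, cs.simple_mul_simple_self, mul_one]
      rw [hind]
      rcases zmod2_cases (indic t₀ (cs.simple j)) with h | h <;> rw [h] <;> decide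

lemma nn_eq_one_of_right_inversion {w t : W} (ht : cs.IsReflection t)
    (h : cs.length (w * t) < cs.length w) : nn cs w t = 1 := by
  rcases zmod2_cases (nn cs w t) with h0 | h0
  · exfalso
    have h1 : nn cs (w * t) t = 1 := by
      have h2 : t * t * t⁻¹ = t := by rw [ht.mul_self, one_mul, ht.inv]
      rw [nn_cocycle, h2, nn_reflection_self cs ht, h0, add_zero]
    obtain ⟨χ, hred, hχ⟩ := cs.exists_reduced_word' (w * t)
    rw [hχ, nn_wordProd] at h1
    have hmem : t ∈ cs.rightInvSeq χ := mem_of_countZ_ne_zero (by rw [h1]; exact one_ne_zero)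
    have hinv := (cs.isRightInversion_of_mem_rightInvSeq hred hmem).2
    rw [← hχ] at hinv
    have h5 : w * t * t = w := by rw [mul_assoc, ht.mul_self, mul_one]
    rw [h5] at hinv
    omega
  · exact h0

/-- **Strong exchange property.** -/
theorem strong_exchange (ω : List B) {t : W} (ht : cs.IsReflection t)
    (h : cs.length (cs.wordProd ω * t) < cs.length (cs.wordProd ω)) :
    ∃ j < ω.length, cs.wordProd (ω.eraseIdx j) = cs.wordProd ω * t := by
  have h1 : nn cs (cs.wordProd ω) t = 1 := nn_eq_one_of_right_inversion cs ht h
  rw [nn_wordProd] at h1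
  have hmem : t ∈ cs.rightInvSeq ω := mem_of_countZ_ne_zero (by rw [h1]; exact one_ne_zero)
  obtain ⟨j, hj, hget⟩ := List.getElem_of_mem hmem
  have hjlen : j < ω.length := by
    have := cs.length_rightInvSeq ω
    omega
  refine ⟨j, hjlen, ?_⟩
  have hD : (cs.rightInvSeq ω).getD j 1 = t := by rw [List.getD_eq_getElem _ _ hj, hget]
  rw [← hD]
  exact (cs.wordProd_mul_getD_rightInvSeq ω j).symm

end BruhatAux
namespace BruhatAux

open Relation

variable {B W : Type*} [Group W] {M : CoxeterMatrix B} (cs : CoxeterSystem M W)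

/-- **Deletion property**: every word has a reduced sublist with the same product. -/
theorem exists_reduced_sublist (ω : List B) :
    ∃ χ, χ.Sublist ω ∧ cs.IsReduced χ ∧ cs.wordProd χ = cs.wordProd ω := by
  obtain ⟨n, hn⟩ : ∃ n, ω.length ≤ n := ⟨ω.length, le_refl _⟩
  induction n generalizing ω with
  | zero =>
      have : ω = [] := List.length_eq_zero_iff.mp (Nat.le_zero.mp hn)
      subst this
      exact ⟨[], List.Sublist.refl _, by simp [CoxeterSystem.IsReduced], rfl⟩
  | succ n ihn =>
      by_cases hred : cs.IsReduced ω
      · exact ⟨ω, List.Sublist.refl ω, hred, rfl⟩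
      · have hex : ∃ k, ¬ cs.IsReduced (ω.take k) := ⟨ω.length, by rwa [List.take_length]⟩
        classical
        set k₀ := Nat.find hex with hk₀
        have hspec : ¬ cs.IsReduced (ω.take k₀) := Nat.find_spec hex
        have hk0pos : 0 < k₀ := by
          rcases Nat.eq_zero_or_pos k₀ with h | h
          · exfalso; apply hspec; rw [h]; simp [CoxeterSystem.IsReduced]
          · exact h
        have hkle : k₀ ≤ ω.length := Nat.find_le (by rwa [List.take_length])
        have hmin : cs.IsReduced (ω.take (k₀ - 1)) := by
          by_contra hc
          exact (Nat.find_min hex (by omega)) hc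
        have hi : k₀ - 1 < ω.length := by omega
        have htake : ω.take k₀ = ω.take (k₀-1) ++ [ω[k₀-1]] := by
          conv_lhs => rw [show k₀ = (k₀-1)+1 by omega]
          rw [List.take_succ, List.getElem?_eq_getElem hi]
          rfl
        set χ := ω.take (k₀-1) with hχ
        set i := ω[k₀-1] with hidef
        have hχlen : χ.length = k₀ - 1 := by
          rw [hχ, List.length_take]; omega
        have hπtake : cs.wordProd (ω.take k₀) = cs.wordProd χ * cs.simple i := by
          rw [htake, cs.wordProd_append]
          congr 1
          rw [show [i] = i :: [] from rfl, cs.wordProd_cons, cs.wordProd_nil, mul_one]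
        have hdesc : cs.length (cs.wordProd χ * cs.simple i) < cs.length (cs.wordProd χ) := by
          have h1 : cs.length (cs.wordProd χ) = k₀ - 1 := by
            rw [← hχlen]; exact hmin
          rcases cs.length_mul_simple (cs.wordProd χ) i with h2 | h2
          · exfalso
            apply hspec
            unfold CoxeterSystem.IsReduced
            rw [hπtake, h2, h1, htake, List.length_append, hχlen]
            simp
          · omega
        obtain ⟨j, hj, hjp⟩ := strong_exchange cs χ (cs.isReflection_simple i) hdesc
        set ω' := χ.eraseIdx j ++ ω.drop k₀ with hω'
        have hπω' : cs.wordProd ω' = cs.wordProd ω := by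
          rw [hω', cs.wordProd_append, hjp, ← hπtake, ← cs.wordProd_append,
            List.take_append_drop]
        have hsubω' : ω'.Sublist ω := by
          conv_rhs => rw [← List.take_append_drop k₀ ω]
          rw [htake]
          exact List.Sublist.append
            ((χ.eraseIdx_sublist j).trans (List.sublist_append_left χ [i]))
            (List.Sublist.refl _)
        have hlen' : ω'.length ≤ n := by
          have h1 := List.length_eraseIdx_add_one hj
          rw [hω', List.length_append, List.length_drop]
          omega
        obtain ⟨χ₂, hs2, hr2, hp2⟩ := ihn ω' hlen'
        exact ⟨χ₂, hs2.trans hsubω', hr2, by rw [hp2, hπω']⟩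

/-- One step of the Bruhat order: `x = y * t` for a reflection `t`, with length decreasing. -/
def ltR (x y : W) : Prop :=
  (∃ t, cs.IsReflection t ∧ x = y * t) ∧ cs.length x < cs.length y

/-- The Bruhat order, defined via chains of reflections. -/
def leC : W → W → Prop := Relation.ReflTransGen (ltR cs)

lemma leC_edge {x y : W} (t : W) (ht : cs.IsReflection t) (hxy : x = y * t)
    (hl : cs.length x < cs.length y) : leC cs x y :=
  ReflTransGen.single ⟨⟨t, ht, hxy⟩, hl⟩

lemma leC_up_edge (i : B) (x : W) (h : cs.length x < cs.length (cs.simple i * x)) :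
    leC cs x (cs.simple i * x) := by
  have ht := (cs.isReflection_simple i).conj (cs.simple i * x)⁻¹
  rw [inv_inv] at ht
  apply leC_edge cs _ ht ?_ h
  have h2 : (cs.simple i * x) * ((cs.simple i * x)⁻¹ * cs.simple i * (cs.simple i * x))
      = cs.simple i * (cs.simple i * x) := by group
  rw [h2, cs.simple_mul_simple_cancel_left]

lemma leC_mul_left_edge (i : B) (x : W) (h : cs.length (cs.simple i * x) < cs.length x) :
    leC cs (cs.simple i * x) x := by
  have ht := (cs.isReflection_simple i).conj x⁻¹
  rw [inv_inv] at ht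
  apply leC_edge cs _ ht ?_ h
  group

/-- Every reduced word of the top element contains a reduced word of any
Bruhat-smaller element as a sublist. -/
theorem leC_subword {x y : W} (h : leC cs x y) :
    ∀ ω : List B, cs.IsReduced ω → cs.wordProd ω = y →
      ∃ χ, χ.Sublist ω ∧ cs.IsReduced χ ∧ cs.wordProd χ = x := by
  induction h using Relation.ReflTransGen.head_induction_on with
  | refl => exact fun ω hred hπ => ⟨ω, List.Sublist.refl ω, hred, hπ⟩
  | @head x' c h' h2 ih =>
      intro ω hred hπ
      obtain ⟨χ, hsub, hχred, hχπ⟩ := ih ω hred hπ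
      obtain ⟨⟨t, ht, hxt⟩, hlen⟩ := h'
      have hlt : cs.length (cs.wordProd χ * t) < cs.length (cs.wordProd χ) := by
        rw [hχπ, ← hxt]
        exact hlen
      obtain ⟨j, hj, hjp⟩ := strong_exchange cs χ ht hlt
      obtain ⟨χ₂, hs2, hr2, hp2⟩ := exists_reduced_sublist cs (χ.eraseIdx j)
      exact ⟨χ₂, hs2.trans ((χ.eraseIdx_sublist j).trans hsub), hr2,
        by rw [hp2, hjp, hχπ, ← hxt]⟩

/-- Exchange-type dichotomy for a Bruhat edge below a left descent. -/
lemma exchange_cover (i : B) {x y : W} (t : W) (ht : cs.IsReflection t) (hxy : x = y * t)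
    (hl : cs.length x < cs.length y) (hdesc : cs.length (cs.simple i * y) < cs.length y) :
    cs.simple i * x = y ∨ cs.length (cs.simple i * x) + 2 ≤ cs.length y := by
  obtain ⟨χ₀, hr, hp⟩ := cs.exists_reduced_word' (cs.simple i * y)
  have hylen : cs.length (cs.simple i * y) + 1 = cs.length y := by
    rcases cs.length_simple_mul y i with h2 | h2 <;> omega
  have hχ₀len : χ₀.length = cs.length (cs.simple i * y) := by
    rw [← hr, hp]
  have hπω : cs.wordProd (i :: χ₀) = y := by
    rw [cs.wordProd_cons, ← hp, cs.simple_mul_simple_cancel_left]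
  have hredω : cs.IsReduced (i :: χ₀) := by
    unfold CoxeterSystem.IsReduced
    rw [hπω, List.length_cons]
    omega
  have hlt : cs.length (cs.wordProd (i :: χ₀) * t) < cs.length (cs.wordProd (i :: χ₀)) := by
    rw [hπω, ← hxy]
    exact hl
  obtain ⟨j, hj, hjp⟩ := strong_exchange cs (i :: χ₀) ht hlt
  rw [hπω, ← hxy] at hjp
  cases j with
  | zero =>
      left
      have h0 : (i :: χ₀).eraseIdx 0 = χ₀ := rfl
      rw [h0] at hjp
      rw [← hjp, ← hp, cs.simple_mul_simple_cancel_left]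
  | succ k =>
      right
      have h0 : (i :: χ₀).eraseIdx (k+1) = i :: χ₀.eraseIdx k := rfl
      rw [h0, cs.wordProd_cons] at hjp
      have hx : cs.simple i * x = cs.wordProd (χ₀.eraseIdx k) := by
        rw [← hjp, cs.simple_mul_simple_cancel_left]
      have hle := cs.length_wordProd_le (χ₀.eraseIdx k)
      rw [← hx] at hle
      have hklen : k < χ₀.length := by
        rw [List.length_cons] at hj
        omega
      have h1 := List.length_eraseIdx_add_one hklen
      omega

/-- **Lifting property** for the chain Bruhat order (left version). -/
theorem leC_lift_left (i : B) {x y : W} (h : leC cs x y)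
    (hy : cs.length y < cs.length (cs.simple i * y)) :
    leC cs (cs.simple i * x) (cs.simple i * y) := by
  induction h using Relation.ReflTransGen.head_induction_on with
  | refl => exact ReflTransGen.refl
  | @head x' c h' h2 ih =>
      obtain ⟨⟨t, ht, hxt⟩, hlen⟩ := h'
      have hxle : cs.length (cs.simple i * x') ≤ cs.length x' + 1 := by
        rcases cs.length_simple_mul x' i with h3 | h3 <;> omega
      rcases Nat.lt_or_ge (cs.length c) (cs.length (cs.simple i * c)) with hc | hc
      · have h3 : leC cs (cs.simple i * c) (cs.simple i * y) := ih
        have hedge : leC cs (cs.simple i * x') (cs.simple i * c) :=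
          leC_edge cs t ht (by rw [hxt, mul_assoc]) (by omega)
        exact hedge.trans h3
      · have hdesc : cs.length (cs.simple i * c) < cs.length c :=
          lt_of_le_of_ne hc (cs.length_simple_mul_ne c i)
        have hcy : leC cs y (cs.simple i * y) := leC_up_edge cs i y hy
        rcases exchange_cover cs i t ht hxt hlen hdesc with heq | hlt2
        · exact (heq ▸ h2).trans hcy
        · have hclen : cs.length (cs.simple i * c) + 1 = cs.length c := by
            rcases cs.length_simple_mul c i with h3 | h3 <;> omega
          have e1 : leC cs (cs.simple i * x') (cs.simple i * c) :=
            leC_edge cs t ht (by rw [hxt, mul_assoc]) (by omega)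
          have e2 : leC cs (cs.simple i * c) c := leC_mul_left_edge cs i c hdesc
          exact e1.trans (e2.trans (h2.trans hcy))

/-- A reduced sublist of a reduced word gives a Bruhat chain. -/
theorem subword_leC : ∀ (ω χ : List B), cs.IsReduced ω → cs.IsReduced χ → χ.Sublist ω →
    leC cs (cs.wordProd χ) (cs.wordProd ω) := by
  intro ω
  induction ω with
  | nil =>
      intro χ _ _ hs
      rw [List.sublist_nil.mp hs]
      exact ReflTransGen.refl
  | cons i ω ih =>
      intro χ hredω hredχ hs
      have hredω' : cs.IsReduced ω := by
        have := hredω.drop 1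
        simpa using this
      have hup : cs.length (cs.wordProd ω) < cs.length (cs.simple i * cs.wordProd ω) := by
        rw [← cs.wordProd_cons, hredω, hredω']
        simp
      rcases List.sublist_cons_iff.mp hs with hcase | ⟨r, rfl, hr⟩
      · have h1 := ih χ hredω' hredχ hcase
        have h2 : leC cs (cs.wordProd ω) (cs.wordProd (i :: ω)) := by
          rw [cs.wordProd_cons]
          exact leC_up_edge cs i _ hup
        exact h1.trans h2
      · have hredr : cs.IsReduced r := by
          have := hredχ.drop 1
          simpa using this
        have h1 := ih r hredω' hredr hr
        have h2 := leC_lift_left cs i h1 hup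
        rw [cs.wordProd_cons, cs.wordProd_cons]
        exact h2

end BruhatAux
/-- Bruhat order on a Coxeter group, defined via the subword property:
`u ≤ v` iff some reduced word for `v` contains a reduced word for `u` as a subword. -/
def bruhatLE {B W : Type*} [Group W] {M : CoxeterMatrix B}
    (cs : CoxeterSystem M W) (u v : W) : Prop :=
  ∃ lv lu : List B, cs.IsReduced lv ∧ cs.wordProd lv = v ∧
    cs.IsReduced lu ∧ cs.wordProd lu = u ∧ lu.Sublist lv

/-- Strict Bruhat order. -/
def bruhatLT {B W : Type*} [Group W] {M : CoxeterMatrix B}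
    (cs : CoxeterSystem M W) (u v : W) : Prop :=
  bruhatLE cs u v ∧ u ≠ v

namespace BruhatAux

variable {B W : Type*} [Group W] {M : CoxeterMatrix B} (cs : CoxeterSystem M W)

lemma wordProd_single (i : B) : cs.wordProd [i] = cs.simple i := by
  rw [show [i] = i :: ([] : List B) from rfl, cs.wordProd_cons, cs.wordProd_nil, mul_one]

lemma bruhatLE_iff_leC {x y : W} : bruhatLE cs x y ↔ leC cs x y := by
  constructor
  · rintro ⟨lv, lu, h1, h2, h3, h4, h5⟩
    exact h2 ▸ h4 ▸ subword_leC cs lv lu h1 h3 h5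
  · intro h
    obtain ⟨ω, hred, hπ⟩ := cs.exists_reduced_word' y
    obtain ⟨χ, hsub, hredχ, hπχ⟩ := leC_subword cs h ω hred hπ.symm
    exact ⟨ω, χ, hred, hπ.symm, hredχ, hπχ, hsub⟩

lemma bruhatLE_trans {x y z : W} (h1 : bruhatLE cs x y) (h2 : bruhatLE cs y z) :
    bruhatLE cs x z := by
  rw [bruhatLE_iff_leC] at *
  exact h1.trans h2

lemma bruhatLE_length_le {x y : W} (h : bruhatLE cs x y) : cs.length x ≤ cs.length y := by
  obtain ⟨lv, lu, h1, h2, h3, h4, h5⟩ := h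
  have hl := h5.length_le
  have e1 : cs.length x = lu.length := by rw [← h4]; exact h3
  have e2 : cs.length y = lv.length := by rw [← h2]; exact h1
  omega

/-- **Lifting property**, right version: if `x ≤ y`, `x < xs` and `ys < y` then `xs ≤ y`. -/
lemma bruhat_lift_right (i : B) {x y : W} (h : bruhatLE cs x y)
    (hx : cs.length (x * cs.simple i) = cs.length x + 1)
    (hy : cs.length (y * cs.simple i) < cs.length y) :
    bruhatLE cs (x * cs.simple i) y := by
  obtain ⟨χ, hredχ, hπχ⟩ := cs.exists_reduced_word' (y * cs.simple i)
  have hylen : cs.length (y * cs.simple i) + 1 = cs.length y := by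
    rcases cs.length_mul_simple y i with h2 | h2 <;> omega
  have hχlen : χ.length = cs.length (y * cs.simple i) := by rw [← hredχ, hπχ]
  have hπω : cs.wordProd (χ ++ [i]) = y := by
    rw [cs.wordProd_append, wordProd_single, ← hπχ, cs.simple_mul_simple_cancel_right]
  have hredω : cs.IsReduced (χ ++ [i]) := by
    unfold CoxeterSystem.IsReduced
    rw [hπω, List.length_append]
    simp only [List.length_singleton]
    omega
  obtain ⟨lu, hsub, hredlu, hπlu⟩ :=
    leC_subword cs ((bruhatLE_iff_leC cs).mp h) (χ ++ [i]) hredω hπω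
  rcases List.sublist_append_iff.mp hsub with ⟨m1, m2, heq, hm1, hm2⟩
  have hm2' : m2 = [] ∨ m2 = [i] := by
    rcases List.sublist_cons_iff.mp hm2 with h0 | ⟨r, hr1, hr2⟩
    · left; exact List.sublist_nil.mp h0
    · right; rw [hr1, List.sublist_nil.mp hr2]
  rcases hm2' with rfl | rfl
  · rw [List.append_nil] at heq
    subst heq
    refine ⟨χ ++ [i], lu ++ [i], hredω, hπω, ?_, ?_, List.Sublist.append hm1 (List.Sublist.refl _)⟩
    · unfold CoxeterSystem.IsReduced
      rw [cs.wordProd_append, wordProd_single, hπlu, List.length_append]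
      simp only [List.length_singleton]
      have e1 : cs.length x = lu.length := by rw [← hπlu]; exact hredlu
      omega
    · rw [cs.wordProd_append, wordProd_single, hπlu]
  · exfalso
    subst heq
    have hπm1 : cs.wordProd m1 = x * cs.simple i := by
      rw [← hπlu, cs.wordProd_append, wordProd_single, cs.simple_mul_simple_cancel_right]
    have h1 : cs.length (x * cs.simple i) ≤ m1.length := hπm1 ▸ cs.length_wordProd_le m1
    have h2 : cs.length x = m1.length + 1 := by
      have := hredlu
      unfold CoxeterSystem.IsReduced at this
      rw [hπlu] at this
      rw [this, List.length_append]
      simp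
    omega

lemma bruhatLT_up (i : B) (x : W)
    (h : cs.length (x * cs.simple i) = cs.length x + 1) :
    bruhatLT cs x (x * cs.simple i) := by
  obtain ⟨lv, hred, hπ⟩ := cs.exists_reduced_word' x
  constructor
  · refine ⟨lv ++ [i], lv, ?_, ?_, hred, hπ.symm, List.sublist_append_left lv [i]⟩
    · unfold CoxeterSystem.IsReduced
      rw [cs.wordProd_append, wordProd_single, ← hπ, h, List.length_append]
      simp only [List.length_singleton]
      have e1 : cs.length x = lv.length := by rw [hπ]; exact hred
      omega
    · rw [cs.wordProd_append, wordProd_single, ← hπ]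
  · intro hc
    have h1 : cs.simple i = 1 := (left_eq_mul.mp hc)
    have h2 := cs.length_simple i
    rw [h1, cs.length_one] at h2
    exact absurd h2 (by omega)

end BruhatAux

/-- if `u < us`, `w < ws`, `u ≤ w` and `us ≰ w`, then every `v` in the
Bruhat interval `[u,w]` satisfies `vs > v`. -/
theorem bruhat_lengthened_in_interval {B W : Type*} [Group W] {M : CoxeterMatrix B}
    (cs : CoxeterSystem M W) (u w : W) (s : B)
    (huw : bruhatLE cs u w)
    (hu : bruhatLT cs u (u * cs.simple s))
    (hw : bruhatLT cs w (w * cs.simple s))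
    (hus : ¬ bruhatLE cs (u * cs.simple s) w) :
    ∀ v : W, bruhatLE cs u v → bruhatLE cs v w →
      bruhatLT cs v (v * cs.simple s) := by
  intro v huv hvw
  have hul : cs.length (u * cs.simple s) = cs.length u + 1 := by
    have h1 := BruhatAux.bruhatLE_length_le cs hu.1
    rcases cs.length_mul_simple u s with h2 | h2
    · exact h2
    · omega
  rcases cs.length_mul_simple v s with h2 | h2
  · exact BruhatAux.bruhatLT_up cs s v h2
  · exfalso
    have hv : cs.length (v * cs.simple s) < cs.length v := by omega
    have h3 := BruhatAux.bruhat_lift_right cs s huv hul hv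
    exact hus (BruhatAux.bruhatLE_trans cs h3 hvw)
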